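/- Let p ≥ 1 and let α_1, …, α_p ∈ ℂ[[y]]. Fix k ∈ {1,…,p} and a positive integer h; set S = {i : O(α_i, α_k) ≥ h}, λ = Σ_{e<h} coeff_e(α_k) y^e, q = Σ_{i=1}^p min(h, O(α_k, α_i)), F_B(z) = ∏_{i∈S} (z − coeff_h(α_i)), and C = ∏_{i∉S} coeff_{d_i}(α_k − α_i), where d_i = O(α_k, α_i) < h for i ∉ S. Then C ≠ 0 and for every z ∈ ℂ and every γ ∈ ℂ[[y]] satisfying coeff_e(γ) = coeff_e(α_k) for all e < h and coeff_h(γ) = z (the higher coefficients of γ being arbitrary), the power series ∏_{i=1}^p (γ − α_i) has order ≥ q and its coefficient at y^q equals C · F_B(z). -/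

import Mathlib

open PowerSeries

lemma my_order_neg (φ : PowerSeries ℂ) : (-φ).order = φ.order := by
  have key : ∀ ψ : PowerSeries ℂ, ψ.order ≤ (-ψ).order := by
    intro ψ
    refine le_order _ _ fun i hi => ?_
    rw [map_neg, coeff_of_lt_order i hi, neg_zero]
  have := key (-φ)
  rw [neg_neg] at this
  exact le_antisymm this (key φ)

lemma coeff_mul_of_le_order (φ ψ : PowerSeries ℂ) (n m : ℕ)
    (hφ : (n : ℕ∞) ≤ φ.order) (hψ : (m : ℕ∞) ≤ ψ.order) :
    PowerSeries.coeff (n + m) (φ * ψ) = PowerSeries.coeff n φ * PowerSeries.coeff m ψ := by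
  rw [coeff_mul]
  refine Finset.sum_eq_single (n, m) ?_ ?_
  · rintro ⟨a, b⟩ hab hne
    rw [Finset.HasAntidiagonal.mem_antidiagonal] at hab
    rcases lt_or_ge a n with hlt | hge
    · rw [coeff_of_lt_order a (lt_of_lt_of_le (by exact_mod_cast hlt) hφ), zero_mul]
    · have hb : b < m := by
        rcases lt_or_eq_of_le hge with h1 | h1
        · omega
        · exfalso; apply hne; simp at hab ⊢; omega
      rw [coeff_of_lt_order b (lt_of_lt_of_le (by exact_mod_cast hb) hψ), mul_zero]
  · intro hmem
    exfalso; exact hmem (Finset.HasAntidiagonal.mem_antidiagonal.mpr rfl)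

lemma coeff_prod_of_le_order {ι : Type*} (s : Finset ι) (β : ι → PowerSeries ℂ) (n : ι → ℕ)
    (hle : ∀ i ∈ s, (n i : ℕ∞) ≤ (β i).order) :
    ((∑ i ∈ s, n i : ℕ) : ℕ∞) ≤ (∏ i ∈ s, β i).order ∧
      PowerSeries.coeff (∑ i ∈ s, n i) (∏ i ∈ s, β i) = ∏ i ∈ s, PowerSeries.coeff (n i) (β i) := by
  classical
  induction s using Finset.cons_induction with
  | empty => simp [PowerSeries.order_one]
  | cons a s ha ih =>
    have hrest := ih (fun i hi => hle i (Finset.mem_cons_of_mem hi))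
    have hA := hle a (Finset.mem_cons_self a s)
    rw [Finset.sum_cons, Finset.prod_cons, Finset.prod_cons]
    constructor
    · calc ((n a + ∑ i ∈ s, n i : ℕ) : ℕ∞) = (n a : ℕ∞) + ((∑ i ∈ s, n i : ℕ) : ℕ∞) := by rw [Nat.cast_add]
        _ ≤ (β a).order + (∏ i ∈ s, β i).order := add_le_add hA hrest.1
        _ ≤ _ := le_order_mul _ _
    · rw [coeff_mul_of_le_order _ _ _ _ hA hrest.1, hrest.2]


/-- Lemma 2 of the paper: for `f(x,y) = ∏ (x - α_i(y))` and any
`γ = λ_B + z y^h + (higher order terms)`,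
`f(γ(y), y) = C · F_B(z) · y^(q(B)) + (higher order terms)`. -/
theorem stmt_3 (p : ℕ) (hp : 1 ≤ p) (α : Fin p → PowerSeries ℂ)
    (k : Fin p) (h : ℕ) (hh : 0 < h)
    (S : Finset (Fin p)) (hS : S = Finset.univ.filter fun i => (h : ℕ∞) ≤ (α i - α k).order)
    (q : ℕ) (hq : q = ∑ i, (min (h : ℕ∞) ((α k - α i).order)).toNat)
    (F : Polynomial ℂ)
    (hF : F = ∏ i ∈ S, (Polynomial.X - Polynomial.C (PowerSeries.coeff h (α i))))
    (C : ℂ)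
    (hC : C = ∏ i ∈ Sᶜ, PowerSeries.coeff ((α k - α i).order.toNat) (α k - α i)) :
    C ≠ 0 ∧
    ∀ (z : ℂ) (γ : PowerSeries ℂ),
      (∀ e < h, PowerSeries.coeff e γ = PowerSeries.coeff e (α k)) →
      PowerSeries.coeff h γ = z →
      (q : ℕ∞) ≤ (∏ i, (γ - α i)).order ∧
      PowerSeries.coeff q (∏ i, (γ - α i)) = C * F.eval z := by
  classical
  -- basic order facts
  have horder : ∀ i, (α k - α i).order = (α i - α k).order := by
    intro i
    rw [show α k - α i = -(α i - α k) by ring, my_order_neg]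
  -- for i ∉ S, the order is finite and < h
  have hout : ∀ i ∉ S, (α k - α i).order < (h : ℕ∞) := by
    intro i hi
    rw [hS, Finset.mem_filter] at hi
    push_neg at hi
    rw [horder]
    exact hi (Finset.mem_univ i)
  have houtlt : ∀ i ∉ S, (α k - α i).order < ⊤ := fun i hi =>
    lt_of_lt_of_le (hout i hi) le_top
  have houtcoe : ∀ i ∉ S, ((α k - α i).order.toNat : ℕ∞) = (α k - α i).order := fun i hi =>
    ENat.coe_toNat (houtlt i hi).ne
  have hcoeffne : ∀ i ∉ S, PowerSeries.coeff ((α k - α i).order.toNat) (α k - α i) ≠ 0 := by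
    intro i hi
    have hlt := houtlt i hi
    have h1 := PowerSeries.coeff_order (fun h0 => hlt.ne (PowerSeries.order_eq_top.mpr h0))
    have h2 : (α k - α i).order.lift hlt = (α k - α i).order.toNat := by
      have := ENat.coe_lift (α k - α i).order hlt
      exact_mod_cast this.trans (houtcoe i hi).symm
    exact h1
  have hCne : C ≠ 0 := by
    rw [hC]
    exact Finset.prod_ne_zero_iff.mpr fun i hi => hcoeffne i (Finset.mem_compl.mp hi)
  refine ⟨hCne, fun z γ hγ hγh => ?_⟩
  set n : Fin p → ℕ := fun i => (min (h : ℕ∞) ((α k - α i).order)).toNat with hn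
  have hnS : ∀ i ∈ S, n i = h := by
    intro i hi
    rw [hS, Finset.mem_filter] at hi
    have : min (h : ℕ∞) ((α k - α i).order) = (h : ℕ∞) := by
      rw [horder]; exact min_eq_left hi.2
    simp [hn, this]
  have hnSc : ∀ i ∉ S, n i = (α k - α i).order.toNat := by
    intro i hi
    have : min (h : ℕ∞) ((α k - α i).order) = (α k - α i).order :=
      min_eq_right (le_of_lt (hout i hi))
    simp [hn, this]
  -- coefficients of γ - α i below h agree with α k - α i
  have hagree : ∀ i, ∀ e < h, PowerSeries.coeff e (γ - α i) = PowerSeries.coeff e (α k - α i) := by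
    intro i e he
    rw [map_sub, map_sub, hγ e he]
  -- order lower bounds
  have hle : ∀ i, (n i : ℕ∞) ≤ (γ - α i).order := by
    intro i
    refine PowerSeries.nat_le_order _ _ fun e he => ?_
    by_cases hi : i ∈ S
    · rw [hnS i hi] at he
      rw [hagree i e he, show α k - α i = -(α i - α k) by ring, map_neg,
        PowerSeries.coeff_of_lt_order e ?_, neg_zero]
      rw [hS, Finset.mem_filter] at hi
      exact lt_of_lt_of_le (by exact_mod_cast he) hi.2
    · rw [hnSc i hi] at he
      have h1 : (e : ℕ∞) < (α k - α i).order := by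
        rw [← houtcoe i hi]; exact_mod_cast he
      have heh : e < h := by
        have h2 : ((α k - α i).order.toNat : ℕ∞) < (h : ℕ∞) := by
          rw [houtcoe i hi]; exact hout i hi
        exact lt_trans he (by exact_mod_cast h2)
      rw [hagree i e heh]
      exact PowerSeries.coeff_of_lt_order e h1
  -- coefficient values at n i
  have hcoeffval : ∀ i, PowerSeries.coeff (n i) (γ - α i) =
      if i ∈ S then z - PowerSeries.coeff h (α i)
      else PowerSeries.coeff ((α k - α i).order.toNat) (α k - α i) := by
    intro i
    by_cases hi : i ∈ S
    · rw [if_pos hi, hnS i hi, map_sub, hγh]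
    · have hlt : (α k - α i).order.toNat < h := by
        have h2 : ((α k - α i).order.toNat : ℕ∞) < (h : ℕ∞) := by
          rw [houtcoe i hi]; exact hout i hi
        exact_mod_cast h2
      rw [if_neg hi, hnSc i hi, hagree i _ hlt]
  -- apply the product lemma
  have hqsum : q = ∑ i, n i := hq
  obtain ⟨hord, hco⟩ := coeff_prod_of_le_order Finset.univ (fun i => γ - α i) n
    (fun i _ => hle i)
  constructor
  · rw [hqsum]; exact hord
  · rw [hqsum, hco]
    have split : ∏ i, PowerSeries.coeff (n i) (γ - α i) =
        (∏ i ∈ S, PowerSeries.coeff (n i) (γ - α i)) *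
        ∏ i ∈ Sᶜ, PowerSeries.coeff (n i) (γ - α i) :=
      (Finset.prod_mul_prod_compl S _).symm
    rw [split]
    have hFS : ∏ i ∈ S, PowerSeries.coeff (n i) (γ - α i) = F.eval z := by
      rw [hF, Polynomial.eval_prod]
      refine Finset.prod_congr rfl fun i hi => ?_
      rw [hcoeffval i, if_pos hi]
      simp
    have hCS : ∏ i ∈ Sᶜ, PowerSeries.coeff (n i) (γ - α i) = C := by
      rw [hC]
      refine Finset.prod_congr rfl fun i hi => ?_
      rw [hcoeffval i, if_neg (Finset.mem_compl.mp hi)]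
    rw [hFS, hCS, mul_comm]
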